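/- Let Z be a type, B ≥ 1 a natural number, z : Fin B → Z a fixed sample, L ≥ 0 and μ̄ ≥ 0 real numbers. Let F be a nonempty set of functions Z → ℝ with |f (z i)| ≤ L for every f ∈ F and every i, and let G be a finite set of functions Z → ℝ with |g (z i)| ≤ L for every g ∈ G and every i, with card(G) = N ≥ 1, such that for every f ∈ F there is g ∈ G with |f (z i) − g (z i)| ≤ μ̄ for all i. Then the empirical Rademacher complexity of F on z satisfies (1/B) · 2^{−B} · ∑_{σ : Fin B → Bool} sup_{f ∈ F} ∑_{i} ε(σ i) · f (z i) ≤ μ̄ + L·√(2·log N / B), where ε(true) = 1 and ε(false) = −1, and the supremum is the real supremum of the (bounded, nonempty) set {∑_i ε(σ i)·f(z i) : f ∈ F}. -/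

import Mathlib

open Finset Real

lemma exp_moment {B : ℕ} (a : Fin B → ℝ) (L lam : ℝ) (ha : ∀ i, |a i| ≤ L) :
    ∑ σ : Fin B → Bool, Real.exp (lam * ∑ i, (if σ i then (1:ℝ) else -1) * a i)
      ≤ 2 ^ B * Real.exp (lam ^ 2 * B * L ^ 2 / 2) := by
  have prodsum := Finset.prod_univ_sum (fun _ : Fin B => (Finset.univ : Finset Bool))
    (fun i b => Real.exp (lam * ((if b then (1:ℝ) else -1) * a i)))
  rw [Fintype.piFinset_univ] at prodsum
  have key : ∑ σ : Fin B → Bool, Real.exp (lam * ∑ i, (if σ i then (1:ℝ) else -1) * a i)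
      = ∏ i, (Real.exp (lam * a i) + Real.exp (-(lam * a i))) := by
    have h1 : ∀ σ : Fin B → Bool, Real.exp (lam * ∑ i, (if σ i then (1:ℝ) else -1) * a i)
        = ∏ i, Real.exp (lam * ((if σ i then (1:ℝ) else -1) * a i)) := by
      intro σ; rw [← Real.exp_sum, Finset.mul_sum]
    simp_rw [h1]
    rw [← prodsum]
    congr 1; funext i
    simp [Fintype.sum_bool]
  rw [key]
  have h2 : ∀ i : Fin B, Real.exp (lam * a i) + Real.exp (-(lam * a i))
      ≤ 2 * Real.exp (lam ^ 2 * L ^ 2 / 2) := by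
    intro i
    have hc : Real.exp (lam * a i) + Real.exp (-(lam * a i)) = 2 * Real.cosh (lam * a i) := by
      rw [Real.cosh_eq]; ring
    rw [hc]
    have hch := Real.cosh_le_exp_half_sq (lam * a i)
    have hsq : (a i) ^ 2 ≤ L ^ 2 := by
      nlinarith [sq_abs (a i), mul_self_le_mul_self (abs_nonneg (a i)) (ha i)]
    have hle : (lam * a i) ^ 2 / 2 ≤ lam ^ 2 * L ^ 2 / 2 := by
      nlinarith [mul_le_mul_of_nonneg_left hsq (sq_nonneg lam)]
    nlinarith [Real.exp_le_exp.2 hle, Real.exp_pos ((lam * a i) ^ 2 / 2)]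
  calc ∏ i, (Real.exp (lam * a i) + Real.exp (-(lam * a i)))
      ≤ ∏ _i : Fin B, 2 * Real.exp (lam ^ 2 * L ^ 2 / 2) := by
        apply Finset.prod_le_prod
        · intro i _; positivity
        · intro i _; exact h2 i
    _ = 2 ^ B * Real.exp (lam ^ 2 * B * L ^ 2 / 2) := by
        rw [Finset.prod_const, Finset.card_univ, Fintype.card_fin, mul_pow, ← Real.exp_nat_mul]
        ring_nf



lemma massart {B : ℕ} (hB : 1 ≤ B) {ι : Type*} (G : Finset ι) (hGne : G.Nonempty)
    (a : ι → Fin B → ℝ) (L : ℝ) (hL : 0 < L) (ha : ∀ g ∈ G, ∀ i, |a g i| ≤ L) :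
    (1 / 2 ^ B : ℝ) * ∑ σ : Fin B → Bool,
        G.sup' hGne (fun g => ∑ i, (if σ i then (1:ℝ) else -1) * a g i)
      ≤ L * Real.sqrt (2 * B * Real.log G.card) := by
  set M : (Fin B → Bool) → ℝ :=
    fun σ => G.sup' hGne (fun g => ∑ i, (if σ i then (1:ℝ) else -1) * a g i) with hM
  set Avg : ℝ := (1 / 2 ^ B : ℝ) * ∑ σ : Fin B → Bool, M σ with hAvg
  have hBpos : (0:ℝ) < B := by exact_mod_cast hB
  have hcardpos : (0:ℝ) < G.card := by exact_mod_cast Finset.card_pos.2 hGne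
  have hlognn : 0 ≤ Real.log G.card := Real.log_nonneg (by exact_mod_cast hGne.card_pos)
  have core : ∀ lam : ℝ, 0 < lam →
      Avg ≤ Real.log G.card / lam + lam * B * L ^ 2 / 2 := by
    intro lam hlam
    have jensen : Real.exp (lam * Avg)
        ≤ (1 / 2 ^ B : ℝ) * ∑ σ : Fin B → Bool, Real.exp (lam * M σ) := by
      have hcard : ∑ _σ : Fin B → Bool, (1 / 2 ^ B : ℝ) = 1 := by
        simp [Finset.card_univ]
      have hj := convexOn_exp.map_sum_le (t := (Finset.univ : Finset (Fin B → Bool)))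
        (w := fun _ => (1 / 2 ^ B : ℝ)) (p := fun σ => lam * M σ)
        (fun _ _ => by positivity) hcard (fun _ _ => Set.mem_univ _)
      simp only [smul_eq_mul] at hj
      have harg : lam * Avg = ∑ σ : Fin B → Bool, (1 / 2 ^ B : ℝ) * (lam * M σ) := by
        rw [hAvg, Finset.mul_sum]; simp_rw [Finset.mul_sum]; congr 1; funext σ; ring
      rw [harg, Finset.mul_sum]
      exact hj
    have step2 : ∀ σ : Fin B → Bool,
        Real.exp (lam * M σ) ≤ ∑ g ∈ G, Real.exp (lam * ∑ i, (if σ i then (1:ℝ) else -1) * a g i) := by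
      intro σ
      obtain ⟨g0, hg0, hg0eq⟩ := Finset.exists_mem_eq_sup' hGne
        (fun g => ∑ i, (if σ i then (1:ℝ) else -1) * a g i)
      have hMeq : M σ = ∑ i, (if σ i then (1:ℝ) else -1) * a g0 i := hg0eq
      rw [hMeq]
      exact Finset.single_le_sum
        (f := fun g => Real.exp (lam * ∑ i, (if σ i then (1:ℝ) else -1) * a g i))
        (fun g _ => (Real.exp_pos _).le) hg0
    have step3 : ∑ σ : Fin B → Bool, Real.exp (lam * M σ)
        ≤ G.card * (2 ^ B * Real.exp (lam ^ 2 * B * L ^ 2 / 2)) := by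
      calc ∑ σ : Fin B → Bool, Real.exp (lam * M σ)
          ≤ ∑ σ : Fin B → Bool, ∑ g ∈ G,
              Real.exp (lam * ∑ i, (if σ i then (1:ℝ) else -1) * a g i) :=
            Finset.sum_le_sum fun σ _ => step2 σ
        _ = ∑ g ∈ G, ∑ σ : Fin B → Bool,
              Real.exp (lam * ∑ i, (if σ i then (1:ℝ) else -1) * a g i) :=
            Finset.sum_comm
        _ ≤ ∑ g ∈ G, 2 ^ B * Real.exp (lam ^ 2 * B * L ^ 2 / 2) :=
            Finset.sum_le_sum fun g hg => exp_moment (a g) L lam (ha g hg)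
        _ = G.card * (2 ^ B * Real.exp (lam ^ 2 * B * L ^ 2 / 2)) := by
            rw [Finset.sum_const, nsmul_eq_mul]
    have h2Bne : ((2:ℝ) ^ B) ≠ 0 := by positivity
    have expbd : Real.exp (lam * Avg)
        ≤ Real.exp (Real.log G.card + lam ^ 2 * B * L ^ 2 / 2) := by
      calc Real.exp (lam * Avg) ≤ (1 / 2 ^ B : ℝ) * ∑ σ : Fin B → Bool, Real.exp (lam * M σ) :=
            jensen
        _ ≤ (1 / 2 ^ B : ℝ) * (G.card * (2 ^ B * Real.exp (lam ^ 2 * B * L ^ 2 / 2))) :=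
            mul_le_mul_of_nonneg_left step3 (by positivity)
        _ = (2 ^ B * (1 / 2 ^ B : ℝ)) * (G.card * Real.exp (lam ^ 2 * B * L ^ 2 / 2)) := by
            ring
        _ = G.card * Real.exp (lam ^ 2 * B * L ^ 2 / 2) := by
            rw [mul_one_div_cancel h2Bne, one_mul]
        _ = Real.exp (Real.log G.card + lam ^ 2 * B * L ^ 2 / 2) := by
            rw [Real.exp_add, Real.exp_log hcardpos]
    have hlin := Real.exp_le_exp.1 expbd
    have hstep : Avg ≤ (Real.log G.card + lam ^ 2 * B * L ^ 2 / 2) / lam := by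
      rw [le_div_iff₀ hlam, mul_comm]; exact hlin
    have heq : (Real.log G.card + lam ^ 2 * B * L ^ 2 / 2) / lam
        = Real.log G.card / lam + lam * B * L ^ 2 / 2 := by
      field_simp
    linarith
  rcases eq_or_lt_of_le hlognn with hlog0 | hlogpos
  · -- log = 0 case
    have hz : L * Real.sqrt (2 * B * Real.log G.card) = 0 := by
      rw [← hlog0]; simp
    rw [hz]
    apply le_of_forall_gt_imp_ge_of_dense
    intro c hc
    have hlam : (0:ℝ) < 2 * c / (B * L ^ 2) := by positivity
    have := core _ hlam
    rw [← hlog0, zero_div, zero_add] at this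
    calc Avg ≤ 2 * c / (B * L ^ 2) * B * L ^ 2 / 2 := this
      _ = c := by field_simp
  · -- log > 0 case
    set lam := Real.sqrt (2 * Real.log G.card / (B * L ^ 2)) with hlamdef
    have hlampos : 0 < lam := Real.sqrt_pos.2 (by positivity)
    have hlam2 : lam ^ 2 = 2 * Real.log G.card / (B * L ^ 2) :=
      Real.sq_sqrt (by positivity)
    have hlogeq : Real.log G.card = lam ^ 2 * B * L ^ 2 / 2 := by
      rw [hlam2]; field_simp
    have hs2 : (L * Real.sqrt (2 * B * Real.log G.card)) ^ 2 = (lam * B * L ^ 2) ^ 2 := by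
      rw [mul_pow, Real.sq_sqrt (by positivity), hlogeq]; ring
    have hse : L * Real.sqrt (2 * B * Real.log G.card) = lam * B * L ^ 2 :=
      (sq_eq_sq₀ (by positivity) (by positivity)).1 hs2
    refine (core lam hlampos).trans ?_
    have h1 : Real.log G.card / lam = lam * B * L ^ 2 / 2 := by
      rw [hlogeq, pow_two]; field_simp
    rw [h1, hse]; linarith



theorem rademacher_covering_bound (Z : Type*) (B : ℕ) (hB : 1 ≤ B) (z : Fin B → Z)
    (L μbar : ℝ) (hL : 0 ≤ L) (hμ : 0 ≤ μbar)
    (F : Set (Z → ℝ)) (hF : F.Nonempty)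
    (hFbd : ∀ f ∈ F, ∀ i, |f (z i)| ≤ L)
    (G : Finset (Z → ℝ)) (hGbd : ∀ g ∈ G, ∀ i, |g (z i)| ≤ L)
    (N : ℕ) (hN : 1 ≤ N) (hcard : G.card = N)
    (hcover : ∀ f ∈ F, ∃ g ∈ G, ∀ i, |f (z i) - g (z i)| ≤ μbar) :
    (1 / (B : ℝ)) * (1 / 2 ^ B) *
        ∑ σ : Fin B → Bool,
          sSup ((fun f : Z → ℝ =>
            ∑ i, (if σ i then (1 : ℝ) else -1) * f (z i)) '' F) ≤
      μbar + L * Real.sqrt (2 * Real.log (N : ℝ) / (B : ℝ)) := by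
  have hBpos : (0:ℝ) < B := by exact_mod_cast hB
  have hGne : G.Nonempty := Finset.card_pos.1 (hcard ▸ hN)
  have hlognn : 0 ≤ Real.log (N : ℝ) := Real.log_nonneg (by exact_mod_cast hN)
  have hrhsnn : 0 ≤ μbar + L * Real.sqrt (2 * Real.log (N : ℝ) / (B : ℝ)) :=
    add_nonneg hμ (mul_nonneg hL (Real.sqrt_nonneg _))
  rcases eq_or_lt_of_le hL with hL0 | hLpos
  · -- L = 0: every element of the image set is 0
    have himg : ∀ σ : Fin B → Bool,
        ((fun f : Z → ℝ => ∑ i, (if σ i then (1:ℝ) else -1) * f (z i)) '' F) = {0} := by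
      intro σ
      ext x
      simp only [Set.mem_image, Set.mem_singleton_iff]
      constructor
      · rintro ⟨f, hf, rfl⟩
        apply Finset.sum_eq_zero
        intro i _
        have h0 : f (z i) = 0 := abs_nonpos_iff.1 (hL0 ▸ hFbd f hf i)
        rw [h0, mul_zero]
      · rintro rfl
        obtain ⟨f, hf⟩ := hF
        refine ⟨f, hf, ?_⟩
        apply Finset.sum_eq_zero
        intro i _
        have h0 : f (z i) = 0 := abs_nonpos_iff.1 (hL0 ▸ hFbd f hf i)
        rw [h0, mul_zero]
    simp_rw [himg, csSup_singleton, Finset.sum_const, smul_zero, mul_zero]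
    exact hrhsnn
  · -- L > 0
    set M : (Fin B → Bool) → ℝ :=
      fun σ => G.sup' hGne (fun g => ∑ i, (if σ i then (1:ℝ) else -1) * g (z i)) with hM
    have step1 : ∀ σ : Fin B → Bool,
        sSup ((fun f : Z → ℝ => ∑ i, (if σ i then (1:ℝ) else -1) * f (z i)) '' F)
          ≤ B * μbar + M σ := by
      intro σ
      apply csSup_le (hF.image _)
      rintro x ⟨f, hf, rfl⟩
      obtain ⟨g, hg, hgc⟩ := hcover f hf
      have hterm : ∀ i : Fin B, (if σ i then (1:ℝ) else -1) * f (z i)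
          ≤ (if σ i then (1:ℝ) else -1) * g (z i) + μbar := by
        intro i
        have := hgc i
        have habs := hgc i
        rcases abs_cases (f (z i) - g (z i)) with h | h <;>
          cases hb : σ i <;> simp only [hb, Bool.false_eq_true, if_false, if_true] <;>
            nlinarith
      calc (∑ i, (if σ i then (1:ℝ) else -1) * f (z i))
          ≤ ∑ i, ((if σ i then (1:ℝ) else -1) * g (z i) + μbar) :=
            Finset.sum_le_sum fun i _ => hterm i
        _ = (∑ i, (if σ i then (1:ℝ) else -1) * g (z i)) + B * μbar := by
            rw [Finset.sum_add_distrib, Finset.sum_const, Finset.card_univ,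
              Fintype.card_fin, nsmul_eq_mul]
        _ ≤ M σ + B * μbar :=
            add_le_add_left (Finset.le_sup' (fun g => ∑ i, (if σ i then (1:ℝ) else -1) * g (z i)) hg) _
        _ = B * μbar + M σ := by ring
    have step2 : ∑ σ : Fin B → Bool,
        sSup ((fun f : Z → ℝ => ∑ i, (if σ i then (1:ℝ) else -1) * f (z i)) '' F)
          ≤ 2 ^ B * (B * μbar) + ∑ σ : Fin B → Bool, M σ := by
      calc ∑ σ : Fin B → Bool,
          sSup ((fun f : Z → ℝ => ∑ i, (if σ i then (1:ℝ) else -1) * f (z i)) '' F)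
          ≤ ∑ σ : Fin B → Bool, (B * μbar + M σ) := Finset.sum_le_sum fun σ _ => step1 σ
        _ = 2 ^ B * (B * μbar) + ∑ σ : Fin B → Bool, M σ := by
            rw [Finset.sum_add_distrib, Finset.sum_const, Finset.card_univ]
            simp [nsmul_eq_mul]
    have hmas : (1 / 2 ^ B : ℝ) * ∑ σ : Fin B → Bool, M σ
        ≤ L * Real.sqrt (2 * B * Real.log (N : ℝ)) := by
      have := massart hB G hGne (fun g i => g (z i)) L hLpos hGbd
      rwa [hcard] at this
    have hsqrt : Real.sqrt (2 * Real.log (N : ℝ) / (B : ℝ))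
        = Real.sqrt (2 * B * Real.log (N : ℝ)) / B := by
      have hrw : 2 * Real.log (N : ℝ) / (B : ℝ) = (2 * B * Real.log (N : ℝ)) / (B : ℝ) ^ 2 := by
        field_simp
      rw [hrw, Real.sqrt_div (by positivity), Real.sqrt_sq hBpos.le]
    have h2B : (0:ℝ) < 2 ^ B := by positivity
    calc (1 / (B : ℝ)) * (1 / 2 ^ B) *
          ∑ σ : Fin B → Bool,
            sSup ((fun f : Z → ℝ => ∑ i, (if σ i then (1:ℝ) else -1) * f (z i)) '' F)
        ≤ (1 / (B : ℝ)) * (1 / 2 ^ B) * (2 ^ B * (B * μbar) + ∑ σ : Fin B → Bool, M σ) :=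
          mul_le_mul_of_nonneg_left step2 (by positivity)
      _ = μbar + (1 / (B : ℝ)) * ((1 / 2 ^ B : ℝ) * ∑ σ : Fin B → Bool, M σ) := by
          field_simp
      _ ≤ μbar + (1 / (B : ℝ)) * (L * Real.sqrt (2 * B * Real.log (N : ℝ))) := by
          have := mul_le_mul_of_nonneg_left hmas (le_of_lt (by positivity : (0:ℝ) < 1 / B))
          linarith
      _ = μbar + L * Real.sqrt (2 * Real.log (N : ℝ) / (B : ℝ)) := by
          rw [hsqrt]; field_simp
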